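/- Let I ⊆ ℝ be an open interval, let ζ, R : ℝ → ℝ be twice continuously differentiable on I with ζ(r) ≠ 0 and R(r) ≠ 0 for all r ∈ I, and suppose the Synge isothermal isotropy ODE holds on I: ζ''(r) − ζ'(r)·R'(r)/R(r) − ζ(r)·(1 − R'(r)² + R(r)R''(r))/(2R(r)²) = 0. Fix r₀ ∈ I and σ, ε ∈ ℝ, and define A : I → ℝ by A(r) = σ + ε ∫_{r₀}^{r} R(s)/ζ(s)² ds. Then (ζ·A, R) also satisfies the Synge isothermal isotropy ODE on I. -/

import Mathlib

/-- **Synge.**  If `(ζ, R)` satisfies the Synge isothermal isotropy ODE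
`ζ'' − ζ'R'/R − ζ(1 − (R')² + RR'')/(2R²) = 0` on an open interval, then so does `(ζ·A, R)`,
where `A(r) = σ + ε ∫ R/ζ²`. -/
theorem synge_isothermal
    (a b : ℝ) (ζ R : ℝ → ℝ)
    (hζ : ContDiffOn ℝ 2 ζ (Set.Ioo a b))
    (hR : ContDiffOn ℝ 2 R (Set.Ioo a b))
    (hζ0 : ∀ r ∈ Set.Ioo a b, ζ r ≠ 0)
    (hR0 : ∀ r ∈ Set.Ioo a b, R r ≠ 0)
    (hODE : ∀ r ∈ Set.Ioo a b,
      deriv (deriv ζ) r - deriv ζ r * (deriv R r / R r)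
        - ζ r * ((1 - (deriv R r) ^ 2 + R r * deriv (deriv R) r) / (2 * (R r) ^ 2)) = 0)
    (r₀ : ℝ) (hr₀ : r₀ ∈ Set.Ioo a b) (σ ε : ℝ) (A : ℝ → ℝ)
    (hA : ∀ r ∈ Set.Ioo a b, A r = σ + ε * ∫ s in r₀..r, R s / (ζ s) ^ 2) :
    ∀ r ∈ Set.Ioo a b,
      deriv (deriv (fun x => ζ x * A x)) r
        - deriv (fun x => ζ x * A x) r * (deriv R r / R r)
        - (ζ r * A r) * ((1 - (deriv R r) ^ 2 + R r * deriv (deriv R) r) / (2 * (R r) ^ 2))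
        = 0 := by
  have hs : IsOpen (Set.Ioo a b) := isOpen_Ioo
  have hζd : ∀ x ∈ Set.Ioo a b, HasDerivAt ζ (deriv ζ x) x := fun x hx =>
    ((hζ.differentiableOn (by norm_num)).differentiableAt (hs.mem_nhds hx)).hasDerivAt
  have hζ1 : ContDiffOn ℝ 1 (deriv ζ) (Set.Ioo a b) := hζ.deriv_of_isOpen hs (by norm_num)
  have hζd2 : ∀ x ∈ Set.Ioo a b, HasDerivAt (deriv ζ) (deriv (deriv ζ) x) x := fun x hx =>
    ((hζ1.differentiableOn (by norm_num)).differentiableAt (hs.mem_nhds hx)).hasDerivAt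
  have hRd : ∀ x ∈ Set.Ioo a b, HasDerivAt R (deriv R x) x := fun x hx =>
    ((hR.differentiableOn (by norm_num)).differentiableAt (hs.mem_nhds hx)).hasDerivAt
  set f : ℝ → ℝ := fun x => R x / (ζ x) ^ 2 with hfdef
  have hfc : ContinuousOn f (Set.Ioo a b) :=
    (hR.continuousOn).div ((hζ.continuousOn).pow 2)
      (fun x hx => pow_ne_zero 2 (hζ0 x hx))
  have hAd : ∀ x ∈ Set.Ioo a b, HasDerivAt A (ε * f x) x := by
    intro x hx
    have hint : IntervalIntegrable f MeasureTheory.volume r₀ x :=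
      (hfc.mono ((Set.ordConnected_Ioo).uIcc_subset hr₀ hx)).intervalIntegrable
    have h1 : HasDerivAt (fun y => ∫ t in r₀..y, f t) (f x) x :=
      intervalIntegral.integral_hasDerivAt_right hint
        (hfc.stronglyMeasurableAtFilter hs x hx)
        (hfc.continuousAt (hs.mem_nhds hx))
    have h2 : HasDerivAt (fun y => σ + ε * ∫ t in r₀..y, f t) (ε * f x) x :=
      (h1.const_mul ε).const_add σ
    exact h2.congr_of_eventuallyEq
      (Filter.eventuallyEq_of_mem (hs.mem_nhds hx) (fun y hy => hA y hy))
  have hM1 : ∀ x ∈ Set.Ioo a b,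
      deriv (fun y => ζ y * A y) x = deriv ζ x * A x + ζ x * (ε * f x) := fun x hx =>
    ((hζd x hx).mul (hAd x hx)).deriv
  intro r hr
  have heq2 : deriv (deriv (fun y => ζ y * A y)) r
      = deriv (fun x => deriv ζ x * A x + ζ x * (ε * f x)) r :=
    Filter.EventuallyEq.deriv_eq
      (Filter.eventuallyEq_of_mem (hs.mem_nhds hr) (fun y hy => hM1 y hy))
  have hfd := (hRd r hr).div ((hζd r hr).pow 2) (pow_ne_zero 2 (hζ0 r hr))
  have hgd : HasDerivAt (fun x => deriv ζ x * A x + ζ x * (ε * f x)) _ r := ((hζd2 r hr).mul (hAd r hr)).add ((hζd r hr).mul (hfd.const_mul ε))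
  rw [heq2, hgd.deriv, hM1 r hr]
  have key : deriv (deriv ζ) r = deriv ζ r * (deriv R r / R r)
      + ζ r * ((1 - (deriv R r) ^ 2 + R r * deriv (deriv R) r) / (2 * (R r) ^ 2)) := by
    linarith [hODE r hr]
  rw [key]
  have hz := hζ0 r hr
  have hRr := hR0 r hr
  simp only [hfdef, Pi.pow_apply]
  field_simp
  ring
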